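/- Let p be an odd prime, and let n, k be integers coprime to p. Then the sum over m from 1 to p-1 of the squared absolute value of the sum over a from 1 to p-1 of χ₀(m·a + n·ā)·e(k·a/p) equals 2p - 5, where χ₀ is the principal Dirichlet character mod p, ā denotes the multiplicative inverse of a mod p, and e(y) = e^{2πiy}. -/

import Mathlib

open Finset Complex

/-- `e p x = e^{2πi x/p}` for `x : ZMod p`, using the canonical representative. -/
noncomputable def e (p : ℕ) [NeZero p] (x : ZMod p) : ℂ :=
  Complex.exp (2 * Real.pi * Complex.I * x.val / p)

lemma e_eq (p : ℕ) [NeZero p] (x : ZMod p) : e p x = ZMod.stdAddChar x := by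
  rw [ZMod.stdAddChar_apply, ZMod.toCircle_apply, e]

lemma e_add (p : ℕ) [NeZero p] (x y : ZMod p) : e p (x + y) = e p x * e p y := by
  simp only [e_eq]; exact AddChar.map_add_eq_mul _ _ _

lemma e_zero (p : ℕ) [NeZero p] : e p 0 = 1 := by
  simp only [e_eq]; exact AddChar.map_zero_eq_one _

lemma e_eq' (p : ℕ) [NeZero p] (x : ZMod p) :
    e p x = Complex.exp ((2 * Real.pi * x.val / p : ℝ) * Complex.I) := by
  rw [e]; push_cast; ring_nf

lemma conj_e (p : ℕ) [NeZero p] (x : ZMod p) :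
    (starRingEnd ℂ) (e p x) = e p (-x) := by
  have h1 : e p x * e p (-x) = 1 := by rw [← e_add]; simp [e_zero]
  have h2 : (starRingEnd ℂ) (e p x) = (e p x)⁻¹ := by
    rw [e_eq' p x, ← Complex.exp_conj, map_mul, Complex.conj_ofReal, Complex.conj_I,
      mul_neg, Complex.exp_neg]
  rw [h2]
  exact (inv_eq_of_mul_eq_one_right h1)

lemma sum_e (p : ℕ) [Fact p.Prime] : ∑ x : ZMod p, e p x = 0 := by
  haveI : Fact (1 < p) := ⟨(Fact.out : p.Prime).one_lt⟩
  simp only [e_eq]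
  apply AddChar.sum_eq_zero_of_ne_one
  intro h
  have hinj := ZMod.injective_stdAddChar (N := p)
  have h01 : (0 : ZMod p) = 1 := hinj (by rw [h]; simp)
  exact zero_ne_one h01

lemma sum_e_mul (p : ℕ) [Fact p.Prime] (u : ZMod p) (hu : u ≠ 0) :
    ∑ a ∈ univ.filter (fun a : ZMod p => a ≠ 0), e p (u * a) = -1 := by
  have h0 : ∑ a : ZMod p, e p (u * a) = 0 := by
    rw [← sum_e p]
    exact Fintype.sum_bijective _ (mulLeft_bijective₀ u hu) _ _ (fun a => rfl)
  rw [← Finset.sum_filter_add_sum_filter_not univ (fun a : ZMod p => a ≠ 0)] at h0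
  have h1 : univ.filter (fun a : ZMod p => ¬ a ≠ 0) = {0} := by
    ext x; simp
  rw [h1, Finset.sum_singleton, mul_zero, e_zero] at h0
  linear_combination h0

lemma card_ne_zero' (p : ℕ) [Fact p.Prime] :
    (univ.filter (fun a : ZMod p => a ≠ 0)).card = p - 1 := by
  rw [filter_ne', card_erase_of_mem (mem_univ 0), card_univ, ZMod.card]

lemma sqrt_set (p : ℕ) [Fact p.Prime] (a : ZMod p) :
    univ.filter (fun b : ZMod p => b ^ 2 = a ^ 2) = {a, -a} := by
  ext b
  simp only [mem_filter, mem_univ, true_and, mem_insert, mem_singleton]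
  rw [sq_eq_sq_iff_eq_or_eq_neg]

lemma swap_sum (p : ℕ) [Fact p.Prime] (f : ZMod p → ℂ) :
    ∑ c ∈ univ.filter (fun c : ZMod p => c ≠ 0),
      ∑ a ∈ univ.filter (fun a : ZMod p => a ^ 2 = c), f a
    = ∑ a ∈ univ.filter (fun a : ZMod p => a ≠ 0), f a := by
  rw [Finset.sum_congr rfl (fun c _ => Finset.sum_filter (fun a : ZMod p => a ^ 2 = c) f)]
  rw [Finset.sum_comm]
  rw [Finset.sum_congr rfl (fun a _ => Finset.sum_ite_eq
    (univ.filter (fun c : ZMod p => c ≠ 0)) (a ^ 2) (fun _ => f a))]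
  rw [← Finset.sum_filter]
  apply Finset.sum_congr _ (fun _ _ => rfl)
  ext a
  simp [pow_eq_zero_iff]

lemma inner_eq (p : ℕ) [Fact p.Prime] (N K : ZMod p) (hN : N ≠ 0) (hK : K ≠ 0)
    (m : ZMod p) (hm : m ≠ 0) :
    ∑ a ∈ univ.filter (fun a : ZMod p => a ≠ 0),
      (1 : DirichletCharacter ℂ p) (m * a + N * a⁻¹) * e p (K * a)
    = -1 - ∑ a ∈ univ.filter (fun a : ZMod p => a ^ 2 = -N * m⁻¹), e p (K * a) := by
  have hstep : ∀ a ∈ univ.filter (fun a : ZMod p => a ≠ 0),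
      (1 : DirichletCharacter ℂ p) (m * a + N * a⁻¹) * e p (K * a)
      = e p (K * a) - (if m * a + N * a⁻¹ = 0 then e p (K * a) else 0) := by
    intro a _
    by_cases h : m * a + N * a⁻¹ = 0
    · rw [h, if_pos rfl, MulChar.map_nonunit _ (by simp), zero_mul, sub_self]
    · rw [MulChar.one_apply (isUnit_iff_ne_zero.mpr h), if_neg h, one_mul, sub_zero]
  rw [Finset.sum_congr rfl hstep, Finset.sum_sub_distrib, sum_e_mul p K hK,
    ← Finset.sum_filter]
  have hset : (univ.filter fun a : ZMod p => a ≠ 0).filter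
        (fun a => m * a + N * a⁻¹ = 0)
      = univ.filter (fun a : ZMod p => a ^ 2 = -N * m⁻¹) := by
    ext a
    simp only [mem_filter, mem_univ, true_and]
    constructor
    · rintro ⟨ha, h⟩
      have key : m * a ^ 2 + N = (m * a + N * a⁻¹) * a := by
        field_simp
      rw [h, zero_mul] at key
      field_simp
      linear_combination key
    · intro h
      have ha : a ≠ 0 := by
        rintro rfl
        exact (mul_ne_zero (neg_ne_zero.mpr hN) (inv_ne_zero hm)) (by simpa using h.symm)
      refine ⟨ha, ?_⟩
      have h2 : m * a ^ 2 + N = 0 := by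
        rw [h]
        field_simp
        ring
      field_simp
      linear_combination h2
  rw [hset]

lemma conj_T (p : ℕ) [Fact p.Prime] (K c : ZMod p) :
    (starRingEnd ℂ) (∑ a ∈ univ.filter (fun a : ZMod p => a ^ 2 = c), e p (K * a))
    = ∑ a ∈ univ.filter (fun a : ZMod p => a ^ 2 = c), e p (K * a) := by
  rw [map_sum]
  rw [Finset.sum_congr rfl (fun a _ => by rw [conj_e, show -(K * a) = K * (-a) by ring])]
  apply Finset.sum_nbij' (fun a => -a) (fun a => -a)
  · intro a ha; simp only [mem_filter, mem_univ, true_and] at ha ⊢; rw [neg_pow]; simpa using ha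
  · intro a ha; simp only [mem_filter, mem_univ, true_and] at ha ⊢; rw [neg_pow]; simpa using ha
  · intro a _; simp
  · intro a _; simp
  · intro a _; simp

lemma reindex_m (p : ℕ) [Fact p.Prime] (N : ZMod p) (hN : N ≠ 0) (G : ZMod p → ℂ) :
    ∑ m ∈ univ.filter (fun m : ZMod p => m ≠ 0), G (-N * m⁻¹)
    = ∑ c ∈ univ.filter (fun c : ZMod p => c ≠ 0), G c := by
  apply Finset.sum_nbij' (fun m => -N * m⁻¹) (fun c => -N * c⁻¹)
  · intro a ha; simp only [mem_filter, mem_univ, true_and] at ha ⊢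
    exact mul_ne_zero (neg_ne_zero.mpr hN) (inv_ne_zero ha)
  · intro a ha; simp only [mem_filter, mem_univ, true_and] at ha ⊢
    exact mul_ne_zero (neg_ne_zero.mpr hN) (inv_ne_zero ha)
  · intro a ha; simp only [mem_filter, mem_univ, true_and] at ha
    field_simp
  · intro a ha; simp only [mem_filter, mem_univ, true_and] at ha
    field_simp
  · intro a _; rfl

lemma sum_T (p : ℕ) [Fact p.Prime] (K : ZMod p) (hK : K ≠ 0) :
    ∑ c ∈ univ.filter (fun c : ZMod p => c ≠ 0),
      ∑ a ∈ univ.filter (fun a : ZMod p => a ^ 2 = c), e p (K * a) = -1 := by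
  rw [swap_sum p (fun a => e p (K * a)), sum_e_mul p K hK]

lemma sum_T_sq (p : ℕ) [Fact p.Prime] (K : ZMod p) (hK : K ≠ 0)
    (h2 : (2 : ZMod p) ≠ 0) (hp1 : 1 ≤ p) :
    ∑ c ∈ univ.filter (fun c : ZMod p => c ≠ 0),
      (∑ a ∈ univ.filter (fun a : ZMod p => a ^ 2 = c), e p (K * a)) ^ 2
    = (p : ℂ) - 2 := by
  set T : ZMod p → ℂ := fun c => ∑ a ∈ univ.filter (fun a : ZMod p => a ^ 2 = c), e p (K * a)
    with hT
  have e1 : ∀ c ∈ univ.filter (fun c : ZMod p => c ≠ 0),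
      (T c) ^ 2 = ∑ a ∈ univ.filter (fun a : ZMod p => a ^ 2 = c),
        (e p (K * a) * T (a ^ 2)) := by
    intro c _
    rw [sq, hT]
    rw [Finset.sum_mul]
    exact Finset.sum_congr rfl (fun a ha => by rw [(Finset.mem_filter.mp ha).2])
  rw [Finset.sum_congr rfl e1, swap_sum p (fun a => e p (K * a) * T (a ^ 2))]
  have e2 : ∀ a ∈ univ.filter (fun a : ZMod p => a ≠ 0),
      e p (K * a) * T (a ^ 2) = e p ((2 * K) * a) + 1 := by
    intro a ha
    have ha' := (Finset.mem_filter.mp ha).2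
    have hne : a ≠ -a := by
      intro h
      rcases mul_eq_zero.mp (show (2 : ZMod p) * a = 0 by linear_combination h) with h' | h'
      · exact h2 h'
      · exact ha' h'
    rw [hT]
    simp only
    rw [sqrt_set p a, Finset.sum_pair hne, mul_add, ← e_add, ← e_add,
      show K * a + K * a = 2 * K * a by ring, show K * a + K * -a = 0 by ring, e_zero]
  rw [Finset.sum_congr rfl e2, Finset.sum_add_distrib,
    sum_e_mul p (2 * K) (mul_ne_zero h2 hK), Finset.sum_const, card_ne_zero' p,
    nsmul_eq_mul, mul_one, Nat.cast_sub hp1]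
  push_cast
  ring

theorem stmt_0 (p : ℕ) [Fact p.Prime] (hp : Odd p) (n k : ℤ)
    (hn : IsCoprime n (p : ℤ)) (hk : IsCoprime k (p : ℤ)) :
    ∑ m ∈ univ.filter (fun m : ZMod p => m ≠ 0),
      (‖∑ a ∈ univ.filter (fun a : ZMod p => a ≠ 0),
        (1 : DirichletCharacter ℂ p) ((m : ZMod p) * a + (n : ZMod p) * a⁻¹)
          * e p ((k : ZMod p) * a)‖) ^ 2 = 2 * p - 5 := by
  have hpp : p.Prime := Fact.out
  have hp1 : 1 ≤ p := hpp.one_le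
  have hcop : ∀ j : ℤ, IsCoprime j (p : ℤ) → ((j : ZMod p) ≠ 0) := by
    intro j hj hj0
    have hd : (p : ℤ) ∣ j := (ZMod.intCast_zmod_eq_zero_iff_dvd j p).mp hj0
    have : IsUnit ((p : ℤ)) := hj.isUnit_of_dvd' hd dvd_rfl
    have h1 := hpp.one_lt
    rcases Int.isUnit_iff.mp this with h | h <;> omega
  have hN : ((n : ℤ) : ZMod p) ≠ 0 := hcop n hn
  have hK : ((k : ℤ) : ZMod p) ≠ 0 := hcop k hk
  have h2 : (2 : ZMod p) ≠ 0 := by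
    intro h
    have : (p : ℕ) ∣ 2 := by
      have := (ZMod.natCast_eq_zero_iff 2 p).mp (by exact_mod_cast h)
      exact this
    have hp2 : p = 2 := (Nat.prime_dvd_prime_iff_eq hpp Nat.prime_two).mp this
    rw [hp2] at hp
    exact (by norm_num : ¬ Odd 2) hp
  set N : ZMod p := ((n : ℤ) : ZMod p) with hNdef
  set K : ZMod p := ((k : ℤ) : ZMod p) with hKdef
  set T : ZMod p → ℂ := fun c => ∑ a ∈ univ.filter (fun a : ZMod p => a ^ 2 = c), e p (K * a)
    with hT
  set S : ZMod p → ℂ := fun m => ∑ a ∈ univ.filter (fun a : ZMod p => a ≠ 0),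
      (1 : DirichletCharacter ℂ p) (m * a + N * a⁻¹) * e p (K * a) with hS
  have main : ∑ m ∈ univ.filter (fun m : ZMod p => m ≠ 0),
      S m * (starRingEnd ℂ) (S m) = 2 * (p : ℂ) - 5 := by
    have hSm : ∀ m ∈ univ.filter (fun m : ZMod p => m ≠ 0),
        S m * (starRingEnd ℂ) (S m)
        = 1 + 2 * T (-N * m⁻¹) + (T (-N * m⁻¹)) ^ 2 := by
      intro m hm
      have hm' := (Finset.mem_filter.mp hm).2
      have hSeq : S m = -1 - T (-N * m⁻¹) := inner_eq p N K hN hK m hm'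
      rw [hSeq, map_sub, map_neg, map_one, hT]
      simp only
      rw [conj_T p K]
      ring
    rw [Finset.sum_congr rfl hSm,
      reindex_m p N hN (fun c => 1 + 2 * T c + (T c) ^ 2)]
    rw [Finset.sum_add_distrib, Finset.sum_add_distrib, ← Finset.mul_sum,
      Finset.sum_const, card_ne_zero' p, hT]
    rw [sum_T p K hK, sum_T_sq p K hK h2 hp1, nsmul_eq_mul, mul_one, Nat.cast_sub hp1]
    push_cast
    ring
  apply Complex.ofReal_injective
  have cast1 : ((∑ m ∈ univ.filter (fun m : ZMod p => m ≠ 0),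
      (‖S m‖) ^ 2 : ℝ) : ℂ)
      = ∑ m ∈ univ.filter (fun m : ZMod p => m ≠ 0), S m * (starRingEnd ℂ) (S m) := by
    push_cast
    exact Finset.sum_congr rfl (fun m _ => by
      rw [← Complex.ofReal_pow, Complex.sq_norm, ← Complex.mul_conj])
  rw [show ∑ m ∈ univ.filter (fun m : ZMod p => m ≠ 0),
      (‖∑ a ∈ univ.filter (fun a : ZMod p => a ≠ 0),
        (1 : DirichletCharacter ℂ p) ((m : ZMod p) * a + (n : ZMod p) * a⁻¹)
          * e p ((k : ZMod p) * a)‖) ^ 2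
      = ∑ m ∈ univ.filter (fun m : ZMod p => m ≠ 0), (‖S m‖) ^ 2 from rfl]
  rw [cast1, main]
  push_cast
  ring
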